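/- If G is a graph with γ_g'(G) = 5, then for every edge e of G, γ_g'(G−e) ≥ 4. -/
import Mathlib


open Classical

noncomputable section

namespace DomGame

variable {V : Type*} [Fintype V]

/-- Closed neighborhood of `v` as a `Finset`. -/
noncomputable def N (G : SimpleGraph V) (v : V) : Finset V :=
  Finset.univ.filter (fun u => G.Adj v u ∨ u = v)

/-- Legal moves given the set `S` of already dominated vertices. -/
noncomputable def moves (G : SimpleGraph V) (S : Finset V) : Finset V :=
  Finset.univ.filter (fun v => ¬ N G v ⊆ S)

lemma card_lt {G : SimpleGraph V} {S : Finset V} (v : V) (hv : v ∈ moves G S) :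
    (Finset.univ \ (S ∪ N G v)).card < (Finset.univ \ S).card := by
  simp only [moves, Finset.mem_filter] at hv
  obtain ⟨u, hu, hus⟩ := Finset.not_subset.mp hv.2
  apply Finset.card_lt_card
  refine ⟨Finset.sdiff_subset_sdiff (le_refl _) Finset.subset_union_left, ?_⟩
  intro hsub
  have := hsub (Finset.mem_sdiff.mpr ⟨Finset.mem_univ u, hus⟩)
  rw [Finset.mem_sdiff, Finset.mem_union] at this
  exact this.2 (Or.inr hu)

mutual
/-- Number of moves with optimal play when it is Dominator's turn and
`S` is the set of already dominated vertices. -/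
noncomputable def gameD (G : SimpleGraph V) (S : Finset V) : ℕ :=
  if h : (moves G S).Nonempty then
    1 + (moves G S).attach.inf' (by simpa using h)
      (fun v => gameS G (S ∪ N G v.1))
  else 0
termination_by (Finset.univ \ S).card
decreasing_by exact card_lt v.1 v.2

/-- Number of moves with optimal play when it is Staller's turn. -/
noncomputable def gameS (G : SimpleGraph V) (S : Finset V) : ℕ :=
  if h : (moves G S).Nonempty then
    1 + (moves G S).attach.sup' (by simpa using h)
      (fun v => gameD G (S ∪ N G v.1))
  else 0
termination_by (Finset.univ \ S).card
decreasing_by exact card_lt v.1 v.2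
end

/-- The (Dominator-start) game domination number. -/
noncomputable def gammaG (G : SimpleGraph V) : ℕ := gameD G ∅

/-- The Staller-start game domination number. -/
noncomputable def gammaG' (G : SimpleGraph V) : ℕ := gameS G ∅

/- ### Auxiliary lemmas -/

lemma self_mem_N (G : SimpleGraph V) (v : V) : v ∈ N G v := by
  simp [N]

lemma mem_moves_of_not_mem {G : SimpleGraph V} {S : Finset V} {x : V} (hx : x ∉ S) :
    x ∈ moves G S := by
  simp only [moves, Finset.mem_filter, Finset.mem_univ, true_and]
  exact fun h => hx (h (self_mem_N G x))

lemma moves_empty_of_univ {G : SimpleGraph V} {S : Finset V} (hS : S = Finset.univ) :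
    ¬ (moves G S).Nonempty := by
  rintro ⟨v, hv⟩
  simp only [moves, Finset.mem_filter] at hv
  exact hv.2 (by simp [hS])

lemma univ_of_moves_empty {G : SimpleGraph V} {S : Finset V}
    (h : ¬ (moves G S).Nonempty) : S = Finset.univ := by
  by_contra hS
  have hx : ∃ x, x ∉ S := by
    by_contra hall
    push_neg at hall
    exact hS (Finset.eq_univ_iff_forall.mpr hall)
  obtain ⟨x, hx⟩ := hx
  exact h ⟨x, mem_moves_of_not_mem hx⟩

lemma gameD_univ {G : SimpleGraph V} {S : Finset V} (hS : S = Finset.univ) :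
    gameD G S = 0 := by
  rw [gameD, dif_neg (moves_empty_of_univ hS)]

lemma gameS_univ {G : SimpleGraph V} {S : Finset V} (hS : S = Finset.univ) :
    gameS G S = 0 := by
  rw [gameS, dif_neg (moves_empty_of_univ hS)]

lemma gameS_le {G : SimpleGraph V} {S : Finset V} {k : ℕ}
    (h : ∀ v ∈ moves G S, gameD G (S ∪ N G v) + 1 ≤ k) : gameS G S ≤ k := by
  rw [gameS]
  split_ifs with hne
  · obtain ⟨v0, hv0⟩ := hne
    have hk : 1 ≤ k := le_trans (by omega) (h v0 hv0)
    have hsup : (moves G S).attach.sup' (by simpa using ⟨v0, hv0⟩)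
        (fun v => gameD G (S ∪ N G v.1)) ≤ k - 1 := by
      apply Finset.sup'_le
      intro v _
      have := h v.1 v.2
      omega
    omega
  · exact Nat.zero_le k

lemma gameS_lower {G : SimpleGraph V} {S : Finset V} {v : V} (hv : v ∈ moves G S) :
    gameD G (S ∪ N G v) + 1 ≤ gameS G S := by
  rw [gameS, dif_pos ⟨v, hv⟩]
  have : gameD G (S ∪ N G v) ≤ (moves G S).attach.sup' (by simp; exact ⟨v, hv⟩)
      (fun w => gameD G (S ∪ N G w.1)) :=
    Finset.le_sup' (f := fun w : {x // x ∈ moves G S} => gameD G (S ∪ N G w.1))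
      (b := (⟨v, hv⟩ : {x // x ∈ moves G S})) (Finset.mem_attach _ _)
  omega

lemma gameD_le_of_move {G : SimpleGraph V} {S : Finset V} {u : V} (hu : u ∈ moves G S) :
    gameD G S ≤ 1 + gameS G (S ∪ N G u) := by
  rw [gameD, dif_pos ⟨u, hu⟩]
  have : (moves G S).attach.inf' (by simp; exact ⟨u, hu⟩)
      (fun w => gameS G (S ∪ N G w.1)) ≤ gameS G (S ∪ N G u) :=
    Finset.inf'_le (f := fun w : {x // x ∈ moves G S} => gameS G (S ∪ N G w.1))
      (Finset.mem_attach _ (⟨u, hu⟩ : {x // x ∈ moves G S}))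
  omega

lemma gameD_extract {G : SimpleGraph V} {S : Finset V} {k : ℕ}
    (hne : (moves G S).Nonempty) (h : gameD G S ≤ k + 1) :
    ∃ u ∈ moves G S, gameS G (S ∪ N G u) ≤ k := by
  rw [gameD, dif_pos hne] at h
  have h' : (moves G S).attach.inf' (by simpa using hne)
      (fun v => gameS G (S ∪ N G v.1)) ≤ k := by omega
  rw [Finset.inf'_le_iff] at h'
  obtain ⟨v, -, hv⟩ := h'
  exact ⟨v.1, v.2, hv⟩

lemma gameD_pos {G : SimpleGraph V} {S : Finset V} (hne : (moves G S).Nonempty) :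
    1 ≤ gameD G S := by
  rw [gameD, dif_pos hne]
  omega

/- ### The key chain of lemmas.
`H` is any graph with smaller closed neighborhoods than `G` (e.g. a spanning
subgraph).  If Staller, starting at a position `Q ⊆ X` of the `H`-game, can be
held to `≤ 1` further moves, then Dominator starting at `X` in the `G`-game
finishes in `≤ 1` move, etc. -/

variable {G H : SimpleGraph V} (hN : ∀ v, N H v ⊆ N G v)

include hN

lemma stepD1 {Q X : Finset V} (hQX : Q ⊆ X) (h1 : gameS H Q ≤ 1) :
    gameD G X ≤ 1 := by
  by_cases hX : X = Finset.univ
  · rw [gameD_univ hX]; omega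
  · have : ∃ x, x ∉ X := by
      by_contra h
      push_neg at h
      exact hX (Finset.eq_univ_iff_forall.mpr h)
    obtain ⟨x, hx⟩ := this
    have hxQ : x ∉ Q := fun h => hx (hQX h)
    have hxH : x ∈ moves H Q := mem_moves_of_not_mem hxQ
    have hlow : gameD H (Q ∪ N H x) + 1 ≤ gameS H Q := gameS_lower hxH
    have h0 : gameD H (Q ∪ N H x) = 0 := by omega
    have huniv : Q ∪ N H x = Finset.univ := by
      apply univ_of_moves_empty (G := H)
      intro hne
      have := gameD_pos hne
      omega
    have hxG : x ∈ moves G X := mem_moves_of_not_mem hx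
    have : gameD G X ≤ 1 + gameS G (X ∪ N G x) := gameD_le_of_move hxG
    have hfin : X ∪ N G x = Finset.univ := by
      have hsub : Finset.univ ⊆ X ∪ N G x := by
        rw [← huniv]
        exact Finset.union_subset_union hQX (hN x)
      exact Finset.univ_subset_iff.mp hsub
    rw [gameS_univ hfin] at this
    omega

lemma stepS2 {Q X : Finset V} (hQX : Q ⊆ X) (h1 : gameS H Q ≤ 1) :
    gameS G X ≤ 2 := by
  apply gameS_le
  intro w _
  have : gameD G (X ∪ N G w) ≤ 1 :=
    stepD1 hN (hQX.trans Finset.subset_union_left) h1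
  omega

lemma stepD3 {Q P : Finset V} (hQP : Q ⊆ P) (h2 : gameD H Q ≤ 2) :
    gameD G P ≤ 3 := by
  by_cases hP : P = Finset.univ
  · rw [gameD_univ hP]; omega
  · have : ∃ p, p ∉ P := by
      by_contra h
      push_neg at h
      exact hP (Finset.eq_univ_iff_forall.mpr h)
    obtain ⟨p, hp⟩ := this
    have hQne : (moves H Q).Nonempty :=
      ⟨p, mem_moves_of_not_mem fun h => hp (hQP h)⟩
    obtain ⟨u, huQ, hu1⟩ := gameD_extract hQne (by omega : gameD H Q ≤ 1 + 1)
    by_cases hm : N G u ⊆ P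
    · -- u is useless in G; Dominator plays any legal move p
      have hpG : p ∈ moves G P := mem_moves_of_not_mem hp
      have hstep : gameD G P ≤ 1 + gameS G (P ∪ N G p) := gameD_le_of_move hpG
      have hsub : Q ∪ N H u ⊆ P ∪ N G p :=
        Finset.union_subset (hQP.trans Finset.subset_union_left)
          (((hN u).trans hm).trans Finset.subset_union_left)
      have := stepS2 hN hsub hu1
      omega
    · have huG : u ∈ moves G P := by
        simp only [moves, Finset.mem_filter, Finset.mem_univ, true_and]
        exact hm
      have hstep : gameD G P ≤ 1 + gameS G (P ∪ N G u) := gameD_le_of_move huG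
      have hsub : Q ∪ N H u ⊆ P ∪ N G u :=
        Finset.union_subset_union hQP (hN u)
      have := stepS2 hN hsub hu1
      omega

lemma stepS4 (h3 : gameS H ∅ ≤ 3) : gameS G ∅ ≤ 4 := by
  apply gameS_le
  intro v _
  have hvH : v ∈ moves H (∅ : Finset V) := by
    apply mem_moves_of_not_mem
    simp
  have h2 : gameD H (∅ ∪ N H v) ≤ 2 := by
    have := gameS_lower hvH
    omega
  have hsub : (∅ : Finset V) ∪ N H v ⊆ ∅ ∪ N G v :=
    Finset.union_subset_union rfl.subset (hN v)
  have := stepD3 hN hsub h2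
  omega

end DomGame

open DomGame in
/-- If `γ_g'(G) = 5`, then `γ_g'(G−e) ≥ 4` for every edge `e`. -/
theorem gameS_five_edge_removal {V : Type*} [Fintype V] (G : SimpleGraph V)
    (hG : gammaG' G = 5) (e : Sym2 V) (he : e ∈ G.edgeSet) :
    4 ≤ gammaG' (G.deleteEdges {e}) := by
  by_contra hlt
  push_neg at hlt
  have hN : ∀ v, N (G.deleteEdges {e}) v ⊆ N G v := by
    intro v u hu
    simp only [N, Finset.mem_filter, Finset.mem_univ, true_and] at hu ⊢
    rcases hu with h | h
    · exact Or.inl ((SimpleGraph.deleteEdges_le {e}) h)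
    · exact Or.inr h
  have h3 : gameS (G.deleteEdges {e}) ∅ ≤ 3 := by
    unfold gammaG' at hlt
    omega
  have := stepS4 hN h3
  unfold gammaG' at hG
  omega
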